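/- Let $\beta = 5/4$, let $W \ge 0$, and let $(N_i)_{i=0}^l$, $(N^*_i)_{i=0}^l$ be sequences with $N_0 = N^*_0 = 0$, $0 \le N_i, N^*_i \le W$, satisfying $W - N_i \le \frac{3}{4}(W - N_{i-1}) + \frac{1}{4}(W - N^*_i)$ for all $1 \le i \le l$. If $L^* \ge \frac{\beta-1}{\beta} \sum_{i=0}^l \beta^i (W - N^*_i)$, then $\sum_{i=0}^l \beta^{i+2}(W - N_i) \le c \cdot L^*$ for some universal constant $c$ (e.g., $c = 1000$ suffices). -/

import Mathlib

/-- Geometric-weighting argument from the latency analysis, with `β = 5/4`: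
if `W - N i ≤ (3/4)(W - N (i-1)) + (1/4)(W - N* i)` for `1 ≤ i ≤ l` and
`L* ≥ ((β-1)/β) ∑_{i=0}^l β^i (W - N* i)`, then
`∑_{i=0}^l β^{i+2} (W - N i) ≤ 1000 · L*`. -/
theorem stmt_9 (W L : ℝ) (hW : 0 ≤ W) (l : ℕ) (N Ns : ℕ → ℝ)
    (hN0 : N 0 = 0) (hNs0 : Ns 0 = 0)
    (hNb : ∀ i ≤ l, 0 ≤ N i ∧ N i ≤ W)
    (hNsb : ∀ i ≤ l, 0 ≤ Ns i ∧ Ns i ≤ W)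
    (hrec : ∀ i, 1 ≤ i → i ≤ l →
      W - N i ≤ 3 / 4 * (W - N (i - 1)) + 1 / 4 * (W - Ns i))
    (hL : ((5 / 4 : ℝ) - 1) / (5 / 4) *
        (∑ i ∈ Finset.range (l + 1), (5 / 4 : ℝ) ^ i * (W - Ns i)) ≤ L) :
    ∑ i ∈ Finset.range (l + 1), (5 / 4 : ℝ) ^ (i + 2) * (W - N i) ≤ 1000 * L := by
  set S : ℝ := ∑ i ∈ Finset.range (l + 1), (5 / 4 : ℝ) ^ (i + 2) * (W - N i) with hS
  set T : ℝ := ∑ i ∈ Finset.range (l + 1), (5 / 4 : ℝ) ^ i * (W - Ns i) with hT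
  -- nonnegativity of terms
  have hNnn : ∀ i, i ≤ l → (0:ℝ) ≤ W - N i := fun i hi => by
    have := (hNb i hi).2; linarith
  have hNsnn : ∀ i, i ≤ l → (0:ℝ) ≤ W - Ns i := fun i hi => by
    have := (hNsb i hi).2; linarith
  -- T ≥ W and T ≥ 0
  have hTW : W ≤ T := by
    rw [hT, Finset.sum_range_succ']
    have h1 : (0:ℝ) ≤ ∑ i ∈ Finset.range l, (5 / 4 : ℝ) ^ (i + 1) * (W - Ns (i + 1)) := by
      apply Finset.sum_nonneg
      intro i hi
      rw [Finset.mem_range] at hi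
      exact mul_nonneg (by positivity) (hNsnn (i + 1) hi)
    simp [hNs0]
    linarith
  -- key recursion inequality
  have key : S ≤ (5/4:ℝ)^2 * W + 15/16 * S + 25/64 * T := by
    have hSsplit : S = (∑ i ∈ Finset.range l, (5 / 4 : ℝ) ^ (i + 1 + 2) * (W - N (i + 1)))
        + (5 / 4 : ℝ) ^ 2 * (W - N 0) := by
      rw [hS, Finset.sum_range_succ']
    have hstep : ∀ i ∈ Finset.range l,
        (5 / 4 : ℝ) ^ (i + 1 + 2) * (W - N (i + 1)) ≤
          15/16 * ((5/4:ℝ) ^ (i + 2) * (W - N i)) + 25/64 * ((5/4:ℝ) ^ (i + 1) * (W - Ns (i + 1))) := by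
      intro i hi
      rw [Finset.mem_range] at hi
      have hr := hrec (i + 1) (Nat.le_add_left 1 i) hi
      simp only [Nat.add_sub_cancel] at hr
      have hp : (0:ℝ) ≤ (5/4:ℝ) ^ i := by positivity
      have e1 : (5 / 4 : ℝ) ^ (i + 1 + 2) = (125/64) * (5/4:ℝ)^i := by ring
      have e2 : (5 / 4 : ℝ) ^ (i + 2) = (25/16) * (5/4:ℝ)^i := by ring
      have e3 : (5 / 4 : ℝ) ^ (i + 1) = (5/4) * (5/4:ℝ)^i := by ring
      rw [e1, e2, e3]
      nlinarith [mul_le_mul_of_nonneg_left hr hp]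
    have hsum := Finset.sum_le_sum hstep
    rw [Finset.sum_add_distrib, ← Finset.mul_sum, ← Finset.mul_sum] at hsum
    -- bound the partial sums by S and T
    have h1 : (∑ i ∈ Finset.range l, (5/4:ℝ) ^ (i + 2) * (W - N i)) ≤ S := by
      rw [hS, Finset.sum_range_succ]
      have : (0:ℝ) ≤ (5 / 4 : ℝ) ^ (l + 2) * (W - N l) :=
        mul_nonneg (by positivity) (hNnn l le_rfl)
      have hmono : (∑ i ∈ Finset.range l, (5/4:ℝ) ^ (i + 2) * (W - N i)) ≤
          (∑ i ∈ Finset.range l, (5/4:ℝ) ^ (i + 2) * (W - N i)) := le_rfl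
      linarith
    have h2 : (∑ i ∈ Finset.range l, (5/4:ℝ) ^ (i + 1) * (W - Ns (i + 1))) ≤ T := by
      rw [hT, Finset.sum_range_succ']
      simp [hNs0]
      linarith
    have hN0' : (5 / 4 : ℝ) ^ 2 * (W - N 0) = (5/4:ℝ)^2 * W := by rw [hN0]; ring
    rw [hSsplit, hN0']
    nlinarith
  have hTL : 1/5 * T ≤ L := by
    have : ((5 / 4 : ℝ) - 1) / (5 / 4) = 1/5 := by norm_num
    rw [this] at hL
    exact hL
  linarith
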